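/- arXiv:2005.03516 — 4 statements merged into one kernel-verified Lean document; each statement's English description precedes it below -/
import Mathlib

section
/- For any positive integer p and any p-core partition λ̄ with characteristic vector (c_0, c_1, ..., c_{p-1}) (a p-tuple of integers summing to 0), the size of λ̄ equals (p/2)·∑_{j=0}^{p-1} c_j² + ∑_{j=1}^{p-1} j·c_j. -/
open scoped BigOperators

lemma sum_Ico_int_mul_two (a b : ℤ) (h : a ≤ b) :
    (∑ m ∈ Finset.Ico a b, m) * 2 = (b - a) * (a + b - 1) := by
  obtain ⟨k, rfl⟩ : ∃ k : ℕ, b = a + k := ⟨(b - a).toNat, by omega⟩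
  clear h
  induction k with
  | zero => simp
  | succ n ih =>
      have hins : Finset.Ico a (a + ((n + 1 : ℕ) : ℤ)) =
          insert (a + n) (Finset.Ico a (a + n)) := by
        ext x
        simp only [Finset.mem_Ico, Finset.mem_insert]
        push_cast
        omega
      rw [hins, Finset.sum_insert (by simp)]
      push_cast
      push_cast at ih
      linear_combination ih

lemma card_eq_sum_rowLen (μ : YoungDiagram) (N : ℕ) (hN : μ.colLen 0 ≤ N) :
    μ.card = ∑ i ∈ Finset.range N, μ.rowLen i := by
  have hcells : μ.cells = (Finset.range N).biUnion μ.row := by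
    ext ⟨i, j⟩
    simp only [Finset.mem_biUnion, Finset.mem_range, YoungDiagram.mem_row_iff,
      YoungDiagram.mem_cells]
    constructor
    · intro h
      have h0 : (i, 0) ∈ μ := μ.up_left_mem le_rfl (Nat.zero_le _) h
      have h1 := YoungDiagram.mem_iff_lt_colLen.mp h0
      exact ⟨i, by omega, h, rfl⟩
    · rintro ⟨k, _, h, rfl⟩; exact h
  have hdisj : Set.PairwiseDisjoint ↑(Finset.range N) μ.row := by
    intro i _ j _ hij
    apply Finset.disjoint_left.mpr
    intro x hx hx'
    rw [YoungDiagram.mem_row_iff] at hx hx'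
    exact hij (hx.2 ▸ hx'.2)
  show μ.cells.card = _
  rw [hcells, Finset.card_biUnion hdisj]
  exact Finset.sum_congr rfl fun i _ => (μ.rowLen_eq_card).symm

lemma fin_sum_mul_two (p : ℕ) : (∑ i : Fin p, (i : ℤ)) * 2 = p * (p - 1) := by
  induction p with
  | zero => simp
  | succ n ih =>
      rw [Fin.sum_univ_castSucc]
      simp only [Fin.coe_castSucc, Fin.val_last]
      push_cast
      push_cast at ih
      linear_combination ih
/-- The charge-zero Maya diagram of a Young diagram. -/
def mayaHat (μ : YoungDiagram) : Set ℤ :=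
  {x | ∃ i : ℕ, x = (μ.rowLen i : ℤ) - (i + 1)}

/-- The charge-zero Maya diagram of the `p`-core associated to a characteristic
vector `c`, obtained by recombining the shifted empty Maya diagrams `M_∅ + c i`. -/
def coreMaya (p : ℕ) (c : Fin p → ℤ) : Set ℤ :=
  {x | ∃ i : Fin p, ∃ m : ℤ, m < c i ∧ x = (p : ℤ) * m + (i : ℤ)}

/-- Adjacency of boxes (sharing an edge). -/
def Adj (a b : ℕ × ℕ) : Prop :=
  (a.1 = b.1 ∧ (a.2 + 1 = b.2 ∨ b.2 + 1 = a.2)) ∨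
  (a.2 = b.2 ∧ (a.1 + 1 = b.1 ∨ b.1 + 1 = a.1))

/-- `lam/mu` is a border strip of size `p`: a connected skew diagram with `p`
boxes containing no `2 × 2` square. -/
def IsBorderStrip (p : ℕ) (lam mu : YoungDiagram) : Prop :=
  mu ≤ lam ∧ (lam.cells \ mu.cells).card = p ∧
  (∀ a ∈ lam.cells \ mu.cells, ∀ b ∈ lam.cells \ mu.cells,
    Relation.ReflTransGen
      (fun x y => x ∈ lam.cells \ mu.cells ∧ y ∈ lam.cells \ mu.cells ∧ Adj x y) a b) ∧
  ¬ ∃ i j : ℕ, (i, j) ∈ lam.cells \ mu.cells ∧ (i + 1, j) ∈ lam.cells \ mu.cells ∧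
      (i, j + 1) ∈ lam.cells \ mu.cells ∧ (i + 1, j + 1) ∈ lam.cells \ mu.cells

/-- A partition is a `p`-core if no border strip of size `p` can be removed from it. -/
def IsPCore (p : ℕ) (lam : YoungDiagram) : Prop :=
  ¬ ∃ mu : YoungDiagram, IsBorderStrip p lam mu

/-- The size of a `p`-core in terms of its characteristic vector. -/
theorem size_core_eq_characteristic_vector (p : ℕ) (hp : 0 < p)
    (c : Fin p → ℤ) (hc : ∑ i, c i = 0) (lbar : YoungDiagram)
    (hcore : IsPCore p lbar) (hm : mayaHat lbar = coreMaya p c) :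
    (lbar.card : ℚ) =
      (p : ℚ) / 2 * ∑ j : Fin p, (c j : ℚ) ^ 2 + ∑ j : Fin p, (j : ℚ) * (c j : ℚ) := by
  classical
  obtain ⟨M, hM1, hM2⟩ : ∃ M : ℕ, lbar.colLen 0 ≤ p * M ∧ ∀ i : Fin p, (c i).natAbs ≤ M := by
    refine ⟨lbar.colLen 0 + (Finset.univ.sup fun i => (c i).natAbs), ?_, ?_⟩
    · calc lbar.colLen 0 ≤ lbar.colLen 0 + _ := Nat.le_add_right _ _
        _ ≤ p * _ := Nat.le_mul_of_pos_left _ hp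
    · intro i
      exact le_trans (Finset.le_sup (f := fun i => (c i).natAbs) (Finset.mem_univ i))
        (Nat.le_add_left _ _)
  set N : ℕ := p * M with hN
  have hcM : ∀ i : Fin p, -(M : ℤ) ≤ c i := fun i => by have := hM2 i; omega
  set f : ℕ → ℤ := fun i => (lbar.rowLen i : ℤ) - (i + 1) with hf
  have hf_anti : ∀ {i j : ℕ}, i < j → f j < f i := by
    intro i j hij
    have h := lbar.rowLen_anti i j hij.le
    simp only [hf]
    push_cast
    omega
  have hf_inj : ∀ x ∈ Finset.range N, ∀ y ∈ Finset.range N, f x = f y → x = y := by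
    intro x _ y _ hxy
    rcases lt_trichotomy x y with h | h | h
    · exact absurd hxy (hf_anti h).ne'
    · exact h
    · exact absurd hxy (hf_anti h).ne
  set A : Finset ℤ := (Finset.range N).image f with hA
  set B : Finset ℤ := Finset.univ.biUnion
      (fun i : Fin p => (Finset.Ico (-(M : ℤ)) (c i)).image fun m => (p : ℤ) * m + (i : ℤ))
    with hB
  -- membership characterizations
  have hA_mem : ∀ x : ℤ, x ∈ A ↔ x ∈ mayaHat lbar ∧ -(N : ℤ) ≤ x := by
    intro x
    simp only [hA, Finset.mem_image, Finset.mem_range, mayaHat, Set.mem_setOf_eq]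
    constructor
    · rintro ⟨i, hi, rfl⟩
      refine ⟨⟨i, rfl⟩, ?_⟩
      have h0 : (0 : ℤ) ≤ (lbar.rowLen i : ℤ) := Int.ofNat_nonneg _
      simp only [hf]
      push_cast
      omega
    · rintro ⟨⟨i, rfl⟩, hx⟩
      refine ⟨i, ?_, rfl⟩
      by_contra hiN
      push_neg at hiN
      have hrl : lbar.rowLen i = 0 := by
        by_contra h
        have h1 : (i, 0) ∈ lbar := YoungDiagram.mem_iff_lt_rowLen.mpr (Nat.pos_of_ne_zero h)
        have h2 := YoungDiagram.mem_iff_lt_colLen.mp h1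
        omega
      rw [hrl] at hx
      simp only [Nat.cast_zero] at hx
      omega
  have hB_mem : ∀ x : ℤ, x ∈ B ↔ x ∈ coreMaya p c ∧ -(N : ℤ) ≤ x := by
    intro x
    simp only [hB, Finset.mem_biUnion, Finset.mem_univ, true_and, Finset.mem_image,
      Finset.mem_Ico, coreMaya, Set.mem_setOf_eq]
    constructor
    · rintro ⟨i, m, ⟨hm1, hm2⟩, rfl⟩
      refine ⟨⟨i, m, hm2, rfl⟩, ?_⟩
      have h0 : (0 : ℤ) ≤ (i : ℤ) := Int.ofNat_nonneg _
      have h1 : (p : ℤ) * (-(M : ℤ)) ≤ (p : ℤ) * m :=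
        mul_le_mul_of_nonneg_left hm1 (by positivity)
      have h2 : -(N : ℤ) = (p : ℤ) * (-(M : ℤ)) := by push_cast [hN]; ring
      omega
    · rintro ⟨⟨i, m, hmc, rfl⟩, hx⟩
      refine ⟨i, m, ⟨?_, hmc⟩, rfl⟩
      by_contra hlt
      push_neg at hlt
      have hi : (i : ℤ) < p := by exact_mod_cast i.isLt
      have h1 : (p : ℤ) * m ≤ (p : ℤ) * (-(M : ℤ) - 1) :=
        mul_le_mul_of_nonneg_left (by omega) (by positivity)
      have h2 : (p : ℤ) * (-(M : ℤ) - 1) = -((p : ℤ) * M) - p := by ring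
      have h3 : -(N : ℤ) = -((p : ℤ) * M) := by push_cast [hN]; ring
      omega
  have hAB : A = B := by
    ext x
    rw [hA_mem, hB_mem, hm]
  -- sum over A
  have hcard : lbar.card = ∑ i ∈ Finset.range N, lbar.rowLen i :=
    card_eq_sum_rowLen lbar N hM1
  have hsum_range : (∑ i ∈ Finset.range N, ((i : ℤ) + 1)) * 2 = (N : ℤ) * (N + 1) := by
    induction N with
    | zero => simp
    | succ n ih =>
        rw [Finset.sum_range_succ]
        push_cast
        push_cast at ih
        linear_combination ih
  have hA_sum : (∑ x ∈ A, x) * 2 = 2 * (lbar.card : ℤ) - (N : ℤ) * (N + 1) := by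
    rw [hA, Finset.sum_image hf_inj]
    simp only [hf]
    rw [Finset.sum_sub_distrib]
    have : ((∑ i ∈ Finset.range N, lbar.rowLen i : ℕ) : ℤ)
        = ∑ i ∈ Finset.range N, (lbar.rowLen i : ℤ) := by push_cast; rfl
    rw [hcard]
    linear_combination -hsum_range - 2 * this
  -- sum over B
  have hdisjB : Set.PairwiseDisjoint (↑(Finset.univ : Finset (Fin p)))
      (fun i : Fin p => (Finset.Ico (-(M : ℤ)) (c i)).image fun m => (p : ℤ) * m + (i : ℤ)) := by
    intro i _ j _ hij
    apply Finset.disjoint_left.mpr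
    intro x hx hx'
    simp only [Finset.mem_image, Finset.mem_Ico] at hx hx'
    obtain ⟨m, _, rfl⟩ := hx
    obtain ⟨m', _, heq⟩ := hx'
    have hdvd : (p : ℤ) ∣ (i : ℤ) - (j : ℤ) := ⟨m' - m, by linear_combination -heq⟩
    have hi : (i : ℤ) < p := by exact_mod_cast i.isLt
    have hj : (j : ℤ) < p := by exact_mod_cast j.isLt
    have h0i : (0 : ℤ) ≤ (i : ℤ) := Int.ofNat_nonneg _
    have h0j : (0 : ℤ) ≤ (j : ℤ) := Int.ofNat_nonneg _
    have habs : |(i : ℤ) - (j : ℤ)| < p := by rw [abs_lt]; omega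
    have := Int.eq_zero_of_abs_lt_dvd hdvd habs
    exact hij (Fin.ext (by omega))
  have hB_sum : (∑ x ∈ B, x) * 2
      = ∑ i : Fin p, ((p : ℤ) * (c i + M) * (c i - M - 1) + 2 * (c i + M) * (i : ℤ)) := by
    rw [hB, Finset.sum_biUnion hdisjB, Finset.sum_mul, ← Finset.sum_congr rfl]
    intro i _
    have hinj : ∀ x ∈ Finset.Ico (-(M : ℤ)) (c i), ∀ y ∈ Finset.Ico (-(M : ℤ)) (c i),
        (p : ℤ) * x + (i : ℤ) = (p : ℤ) * y + (i : ℤ) → x = y := by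
      intro x _ y _ hxy
      have hp0 : (p : ℤ) ≠ 0 := by positivity
      exact mul_left_cancel₀ hp0 (by omega)
    rw [Finset.sum_image hinj, Finset.sum_add_distrib, ← Finset.mul_sum, Finset.sum_const,
      Int.card_Ico]
    have hto : (((c i + (M : ℤ)).toNat : ℤ)) = c i + M :=
      Int.toNat_of_nonneg (by have := hcM i; omega)
    have hg := sum_Ico_int_mul_two (-(M : ℤ)) (c i) (hcM i)
    rw [show c i - -(M : ℤ) = c i + (M : ℤ) from by ring]
    simp only [nsmul_eq_mul]
    rw [hto]
    linear_combination -(p : ℤ) * hg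
  -- the key integer identity
  have key : 2 * (lbar.card : ℤ) = (p : ℤ) * ∑ i : Fin p, (c i) ^ 2
      + 2 * ∑ i : Fin p, (i : ℤ) * c i := by
    have hmain : 2 * (lbar.card : ℤ) - (N : ℤ) * (N + 1)
        = ∑ i : Fin p, ((p : ℤ) * (c i + M) * (c i - M - 1) + 2 * (c i + M) * (i : ℤ)) := by
      rw [← hA_sum, hAB, hB_sum]
    have hexp : ∑ i : Fin p, ((p : ℤ) * (c i + M) * (c i - M - 1) + 2 * (c i + M) * (i : ℤ))
        = (p : ℤ) * (∑ i : Fin p, (c i) ^ 2) - (p : ℤ) * (∑ i : Fin p, c i)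
          + 2 * (∑ i : Fin p, (i : ℤ) * c i) + 2 * (M : ℤ) * (∑ i : Fin p, (i : ℤ))
          - (p : ℤ) * ((p : ℤ) * ((M : ℤ) ^ 2 + M)) := by
      rw [Finset.mul_sum, Finset.mul_sum, Finset.mul_sum, Finset.mul_sum, ← Finset.sum_sub_distrib,
        ← Finset.sum_add_distrib, ← Finset.sum_add_distrib]
      rw [show (p : ℤ) * ((p : ℤ) * ((M : ℤ) ^ 2 + M))
          = ∑ _i : Fin p, (p : ℤ) * ((M : ℤ) ^ 2 + M) by
        rw [Finset.sum_const, Finset.card_univ, Fintype.card_fin, nsmul_eq_mul]]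
      rw [← Finset.sum_sub_distrib]
      exact Finset.sum_congr rfl fun i _ => by ring
    have hSI := fin_sum_mul_two p
    have hNc : (N : ℤ) = (p : ℤ) * M := by push_cast [hN]; ring
    rw [hexp, hc] at hmain
    rw [hNc] at hmain
    linear_combination hmain + (M : ℤ) * hSI
  -- pass to ℚ
  have keyQ : 2 * (lbar.card : ℚ) = (p : ℚ) * ∑ j : Fin p, (c j : ℚ) ^ 2
      + 2 * ∑ j : Fin p, (j : ℚ) * (c j : ℚ) := by
    exact_mod_cast congrArg (fun z : ℤ => (z : ℚ)) key
  linear_combination keyQ / 2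
end

section
/- For any partition λ, the product of all hook lengths of λ equals the product over all pairs (m, n) with m ∈ M_λ, n ∉ M_λ, and m > n, of the differences (m − n), where M_λ is the Maya diagram of λ. -/
open scoped BigOperators

/-- The hook length of a box of a Young diagram. -/
def hook (μ : YoungDiagram) (c : ℕ × ℕ) : ℕ :=
  (μ.rowLen c.1 - c.2) + (μ.colLen c.2 - c.1) - 1

/-- The Maya diagram `M_λ = {n < 0} ∪ {λ_i + r - i}` of a partition. -/
def maya (μ : YoungDiagram) : Set ℤ :=
  {x | ∃ i : ℕ, x = (μ.rowLen i : ℤ) - (i + 1) + (μ.colLen 0 : ℤ)}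

namespace MayaAux

variable (μ : YoungDiagram)

/-- Beta numbers. -/
noncomputable def mfun (i : ℕ) : ℤ := (μ.rowLen i : ℤ) + (μ.colLen 0 : ℤ) - (i + 1)

/-- Cobeta numbers. -/
noncomputable def nfun (j : ℕ) : ℤ := (j : ℤ) - (μ.colLen j : ℤ) + (μ.colLen 0 : ℤ)

lemma maya_eq_range : maya μ = Set.range (mfun μ) := by
  ext x
  constructor
  · rintro ⟨i, rfl⟩; exact ⟨i, by simp [mfun]; ring⟩
  · rintro ⟨i, rfl⟩; exact ⟨i, by simp [mfun]; ring⟩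

lemma mfun_strictAnti : StrictAnti (mfun μ) := by
  apply strictAnti_nat_of_succ_lt
  intro i
  have := μ.rowLen_anti i (i + 1) (by omega)
  simp only [mfun]
  push_cast
  omega

lemma nfun_strictMono : StrictMono (nfun μ) := by
  apply strictMono_nat_of_lt_succ
  intro j
  have := μ.colLen_anti j (j + 1) (by omega)
  simp only [nfun]
  push_cast
  omega

lemma mem_cells_iff (i j : ℕ) : (i, j) ∈ μ.cells ↔ nfun μ j < mfun μ i := by
  rw [YoungDiagram.mem_cells]
  constructor
  · intro h
    have h1 : j < μ.rowLen i := YoungDiagram.mem_iff_lt_rowLen.mp h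
    have h2 : i < μ.colLen j := YoungDiagram.mem_iff_lt_colLen.mp h
    simp only [mfun, nfun]; omega
  · intro h
    by_contra hc
    have h1 : μ.rowLen i ≤ j := by
      by_contra h1
      exact hc (YoungDiagram.mem_iff_lt_rowLen.mpr (by omega))
    have h2 : μ.colLen j ≤ i := by
      by_contra h2
      exact hc (YoungDiagram.mem_iff_lt_colLen.mpr (by omega))
    simp only [mfun, nfun] at h; omega

lemma notMem_cells_iff (i j : ℕ) : (i, j) ∉ μ.cells ↔ mfun μ i < nfun μ j := by
  rw [YoungDiagram.mem_cells]
  constructor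
  · intro hc
    have h1 : μ.rowLen i ≤ j := by
      by_contra h1
      exact hc (YoungDiagram.mem_iff_lt_rowLen.mpr (by omega))
    have h2 : μ.colLen j ≤ i := by
      by_contra h2
      exact hc (YoungDiagram.mem_iff_lt_colLen.mpr (by omega))
    simp only [mfun, nfun]; omega
  · intro h hc
    have h1 : j < μ.rowLen i := YoungDiagram.mem_iff_lt_rowLen.mp hc
    have h2 : i < μ.colLen j := YoungDiagram.mem_iff_lt_colLen.mp hc
    simp only [mfun, nfun] at h; omega

lemma mfun_ne_nfun (i j : ℕ) : mfun μ i ≠ nfun μ j := by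
  by_cases h : (i, j) ∈ μ.cells
  · have := (mem_cells_iff μ i j).mp h; omega
  · have := (notMem_cells_iff μ i j).mp (by simpa using h); omega

lemma hook_cast (i j : ℕ) (h : (i, j) ∈ μ.cells) :
    (hook μ (i, j) : ℤ) = mfun μ i - nfun μ j := by
  rw [YoungDiagram.mem_cells] at h
  have h1 : j < μ.rowLen i := YoungDiagram.mem_iff_lt_rowLen.mp h
  have h2 : i < μ.colLen j := YoungDiagram.mem_iff_lt_colLen.mp h
  simp only [hook, mfun, nfun]
  push_cast
  omega

lemma nfun_ge (j : ℕ) : (j : ℤ) ≤ nfun μ j := by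
  have := μ.colLen_anti 0 j (by omega)
  simp only [nfun]; omega

lemma cover (x : ℤ) (hx : x ∉ Set.range (nfun μ)) : x ∈ Set.range (mfun μ) := by
  rcases lt_or_ge x 0 with hneg | hpos
  · -- x < 0 : take i with rowLen i = 0
    refine ⟨(μ.colLen 0 - 1 - x).toNat, ?_⟩
    have hi : ((μ.colLen 0 - 1 - x).toNat : ℤ) = (μ.colLen 0 : ℤ) - 1 - x := by omega
    have hrow : μ.rowLen ((μ.colLen 0 - 1 - x).toNat) = 0 := by
      by_contra hr
      have : ((μ.colLen 0 - 1 - x).toNat, 0) ∈ μ :=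
        YoungDiagram.mem_iff_lt_rowLen.mpr (by omega)
      have := YoungDiagram.mem_iff_lt_colLen.mp this
      omega
    simp only [mfun, hrow]
    omega
  · -- x ≥ 0 : find maximal j with nfun j ≤ x
    have h0 : nfun μ 0 ≤ x := by simp [nfun]; omega
    have hbdd : ∀ j : ℕ, nfun μ j ≤ x → j ≤ x.toNat := by
      intro j hj
      have := nfun_ge μ j
      omega
    -- the set {j | nfun j ≤ x} is nonempty and bounded; take its max
    classical
    obtain ⟨j, hj, hjmax⟩ : ∃ j : ℕ, nfun μ j ≤ x ∧ x < nfun μ (j + 1) := by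
      by_contra hcon
      push_neg at hcon
      have key : ∀ j : ℕ, nfun μ j ≤ x := by
        intro j
        induction j with
        | zero => exact h0
        | succ k ih => exact hcon k ih
      have := key (x.toNat + 1)
      have := hbdd _ this
      omega
    have hjlt : nfun μ j < x := lt_of_le_of_ne hj (fun h => hx ⟨j, h⟩)
    have hnj : nfun μ j = (j : ℤ) - (μ.colLen j : ℤ) + (μ.colLen 0 : ℤ) := rfl
    -- 1 ≤ t ≤ colLen j - colLen (j+1), i := colLen j - t
    set t : ℤ := x - nfun μ j with ht
    have ht1 : 1 ≤ t := by omega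
    have ht2 : t ≤ (μ.colLen j : ℤ) - (μ.colLen (j + 1) : ℤ) := by
      simp only [nfun] at hjmax; push_cast at hjmax; omega
    refine ⟨((μ.colLen j : ℤ) - t).toNat, ?_⟩
    have hiz : (((μ.colLen j : ℤ) - t).toNat : ℤ) = (μ.colLen j : ℤ) - t := by omega
    set i : ℕ := ((μ.colLen j : ℤ) - t).toNat with hi
    have hmem : (i, j) ∈ μ := YoungDiagram.mem_iff_lt_colLen.mpr (by omega)
    have hnmem : (i, j + 1) ∉ μ := by
      intro hmem2
      have := YoungDiagram.mem_iff_lt_colLen.mp hmem2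
      omega
    have hr1 : j < μ.rowLen i := YoungDiagram.mem_iff_lt_rowLen.mp hmem
    have hr2 : μ.rowLen i ≤ j + 1 := by
      by_contra hr
      exact hnmem (YoungDiagram.mem_iff_lt_rowLen.mpr (by omega))
    have hrow : μ.rowLen i = j + 1 := by omega
    simp only [mfun, hrow]
    push_cast
    omega

end MayaAux

open MayaAux in
/-- The product of all hook lengths equals the product of `m - n` over pairs with
`m ∈ M_λ`, `n ∉ M_λ`, `m > n`. -/
theorem prod_hooks_eq_maya_prod (lam : YoungDiagram) :
    (∏ c ∈ lam.cells, (hook lam c : ℤ)) =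
      ∏ᶠ mn ∈ {mn : ℤ × ℤ | mn.1 ∈ maya lam ∧ mn.2 ∉ maya lam ∧ mn.2 < mn.1},
        (mn.1 - mn.2) := by
  classical
  set e : ℕ × ℕ → ℤ × ℤ := fun c => (mfun lam c.1, nfun lam c.2) with he
  have hset : {mn : ℤ × ℤ | mn.1 ∈ maya lam ∧ mn.2 ∉ maya lam ∧ mn.2 < mn.1}
      = ↑(lam.cells.image e) := by
    ext ⟨a, b⟩
    simp only [Set.mem_setOf_eq, Finset.coe_image, Set.mem_image, Finset.mem_coe]
    constructor
    · rintro ⟨ha, hb, hab⟩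
      rw [maya_eq_range] at ha hb
      obtain ⟨i, rfl⟩ := ha
      obtain ⟨j, rfl⟩ : b ∈ Set.range (nfun lam) := by
        by_contra hn
        exact hb (cover lam b hn)
      exact ⟨(i, j), (mem_cells_iff lam i j).mpr hab, rfl⟩
    · rintro ⟨⟨i, j⟩, hc, heq⟩
      obtain ⟨rfl, rfl⟩ : mfun lam i = a ∧ nfun lam j = b := by
        simpa [he, Prod.ext_iff] using heq
      have hlt := (mem_cells_iff lam i j).mp hc
      refine ⟨?_, ?_, hlt⟩
      · rw [maya_eq_range]; exact ⟨i, rfl⟩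
      · rw [maya_eq_range]
        rintro ⟨i', hi'⟩
        exact mfun_ne_nfun lam i' j hi'
  rw [hset, finprod_mem_coe_finset, Finset.prod_image ?_]
  · refine Finset.prod_congr rfl ?_
    rintro ⟨i, j⟩ hc
    exact hook_cast lam i j hc
  · rintro ⟨i, j⟩ _ ⟨i', j'⟩ _ hij
    simp only [he, Prod.mk.injEq] at hij
    have h1 := (mfun_strictAnti lam).injective hij.1
    have h2 := (nfun_strictMono lam).injective hij.2
    simp [h1, h2]
end

section
/- A partition is a p-core (i.e., has no removable border strip of size p) if and only if none of its hook lengths is divisible by p. -/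
open scoped BigOperators

lemma memc {lam : YoungDiagram} {i j : ℕ} : (i, j) ∈ lam.cells ↔ j < lam.rowLen i := by
  rw [YoungDiagram.mem_cells, YoungDiagram.mem_iff_lt_rowLen]

lemma memc' {lam : YoungDiagram} {i j : ℕ} : (i, j) ∈ lam.cells ↔ i < lam.colLen j := by
  rw [YoungDiagram.mem_cells, YoungDiagram.mem_iff_lt_colLen]

lemma hook_eq {lam : YoungDiagram} {i j : ℕ} (h : (i, j) ∈ lam.cells) :
    hook lam (i, j) + j + i + 1 = lam.rowLen i + lam.colLen j := by
  have h1 : j < lam.rowLen i := memc.mp h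
  have h2 : i < lam.colLen j := memc'.mp h
  unfold hook; simp only []; omega

lemma hook_pos {lam : YoungDiagram} {i j : ℕ} (h : (i, j) ∈ lam.cells) :
    0 < hook lam (i, j) := by
  have h1 : j < lam.rowLen i := memc.mp h
  have h2 : i < lam.colLen j := memc'.mp h
  unfold hook; simp only []; omega

lemma rowLen_le_of_le {mu lam : YoungDiagram} (h : mu ≤ lam) (a : ℕ) :
    mu.rowLen a ≤ lam.rowLen a := by
  by_contra hc
  push_neg at hc
  have : (a, lam.rowLen a) ∈ mu := YoungDiagram.mem_iff_lt_rowLen.mpr hc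
  have : (a, lam.rowLen a) ∈ lam := h this
  rw [YoungDiagram.mem_iff_lt_rowLen] at this
  omega



lemma lo_anti {i1 i2 : ℕ} {lo hi : ℕ → ℕ}
    (hstep : ∀ a, i1 ≤ a → a < i2 → lo a + 1 = hi (a + 1))
    (hlt : ∀ a, i1 ≤ a → a ≤ i2 → lo a < hi a) :
    ∀ n b, b = i1 + n → b ≤ i2 → lo b ≤ lo i1 := by
  intro n
  induction n with
  | zero =>
    intro b hb _
    have : b = i1 := by omega
    subst this; exact le_refl _
  | succ m ih =>
    intro b hb hb2
    have h1 := ih (i1 + m) rfl (by omega)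
    have h2 := hstep (i1 + m) (by omega) (by omega)
    have h3 := hlt b (by omega) hb2
    have : b = i1 + m + 1 := by omega
    subst this
    omega

lemma card_strip : ∀ (n : ℕ) (i1 i2 : ℕ) (S : Finset (ℕ × ℕ)) (lo hi : ℕ → ℕ),
    i2 - i1 = n → i1 ≤ i2 →
    (∀ a y, (a, y) ∈ S ↔ (i1 ≤ a ∧ a ≤ i2 ∧ lo a ≤ y ∧ y < hi a)) →
    (∀ a, i1 ≤ a → a ≤ i2 → lo a < hi a) →
    (∀ a, i1 ≤ a → a < i2 → lo a + 1 = hi (a + 1)) →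
    S.card = (hi i1 - lo i2) + (i2 - i1) := by
  intro n
  induction n with
  | zero =>
    intro i1 i2 S lo hi hn hle hmem _ _
    have hi12 : i1 = i2 := by omega
    subst hi12
    have : S = (Finset.Ico (lo i1) (hi i1)).image (fun y => (i1, y)) := by
      ext ⟨a, y⟩
      simp only [Finset.mem_image, Finset.mem_Ico, hmem]
      constructor
      · rintro ⟨h1, h2, h3, h4⟩
        have : a = i1 := by omega
        subst this
        exact ⟨y, ⟨h3, h4⟩, rfl⟩
      · rintro ⟨z, ⟨h3, h4⟩, h5⟩
        obtain ⟨rfl, rfl⟩ : i1 = a ∧ z = y := by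
          constructor <;> [exact congrArg Prod.fst h5; exact congrArg Prod.snd h5]
        exact ⟨le_refl _, le_refl _, h3, h4⟩
    rw [this, Finset.card_image_of_injective _ (fun a b h => congrArg Prod.snd h)]
    rw [Nat.card_Ico]; omega
  | succ m ih =>
    intro i1 i2 S lo hi hn hle hmem hlt hstep
    classical
    have hlt12 : i1 < i2 := by omega
    set S' := S.filter (fun c => i1 + 1 ≤ c.1) with hS'
    have hmem' : ∀ a y, (a, y) ∈ S' ↔ (i1 + 1 ≤ a ∧ a ≤ i2 ∧ lo a ≤ y ∧ y < hi a) := by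
      intro a y
      rw [hS', Finset.mem_filter, hmem]
      constructor
      · rintro ⟨⟨_, h2, h3, h4⟩, h5⟩; exact ⟨h5, h2, h3, h4⟩
      · rintro ⟨h1, h2, h3, h4⟩; exact ⟨⟨by omega, h2, h3, h4⟩, h1⟩
    have hcard' := ih (i1 + 1) i2 S' lo hi (by omega) (by omega) hmem'
      (fun a h1 h2 => hlt a (by omega) h2) (fun a h1 h2 => hstep a (by omega) h2)
    have hrow : S.filter (fun c => ¬ (i1 + 1 ≤ c.1)) =
        (Finset.Ico (lo i1) (hi i1)).image (fun y => (i1, y)) := by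
      ext ⟨a, y⟩
      simp only [Finset.mem_filter, Finset.mem_image, Finset.mem_Ico, hmem, not_le]
      constructor
      · rintro ⟨⟨h1, h2, h3, h4⟩, h5⟩
        have : a = i1 := by omega
        subst this
        exact ⟨y, ⟨h3, h4⟩, rfl⟩
      · rintro ⟨z, ⟨h3, h4⟩, h5⟩
        obtain ⟨rfl, rfl⟩ : i1 = a ∧ z = y := by
          constructor <;> [exact congrArg Prod.fst h5; exact congrArg Prod.snd h5]
        exact ⟨⟨le_refl _, by omega, h3, h4⟩, by omega⟩
    have hsplit : S'.card + (S.filter (fun c => ¬ (i1 + 1 ≤ c.1))).card = S.card :=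
      Finset.card_filter_add_card_filter_not _
    rw [hrow, Finset.card_image_of_injective _ (fun a b h => congrArg Prod.snd h)] at hsplit
    rw [Nat.card_Ico] at hsplit
    have hl1 := hlt i1 (le_refl _) (by omega)
    have hl2 := hlt i2 (by omega) (le_refl _)
    have hs1 := hstep i1 (le_refl _) hlt12
    have hmono : lo i2 ≤ lo (i1 + 1) :=
      lo_anti (fun a h1 h2 => hstep a (by omega) h2) (fun a h1 h2 => hlt a (by omega) h2)
        (i2 - (i1 + 1)) i2 (by omega) (le_refl _)
    have hl3 := hlt (i1 + 1) (by omega) (by omega)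
    omega







section walks
variable {S : Finset (ℕ × ℕ)}

lemma adj_fst {x y : ℕ × ℕ} (h : Adj x y) : y.1 ≤ x.1 + 1 := by
  rcases h with ⟨h1, _⟩ | ⟨_, h2 | h2⟩ <;> omega

lemma walk_rows {c1 c2 : ℕ × ℕ}
    (h : Relation.ReflTransGen (fun x y => x ∈ S ∧ y ∈ S ∧ Adj x y) c1 c2) :
    c1 ∈ S → ∀ a, c1.1 ≤ a → a ≤ c2.1 → ∃ y, (a, y) ∈ S := by
  induction h using Relation.ReflTransGen.head_induction_on with
  | refl =>
    intro h a h1 h2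
    have : a = c2.1 := by omega
    subst this
    exact ⟨c2.2, h⟩
  | @head x x' step tail ih =>
    obtain ⟨hx, hx', hadj⟩ := step
    intro _ a h1 h2
    rcases Nat.eq_or_lt_of_le h1 with h1 | h1
    · exact ⟨x.2, by rwa [← h1]⟩
    · exact ih hx' a (by have := adj_fst hadj; omega) h2

lemma walk_cross {c1 c2 : ℕ × ℕ}
    (h : Relation.ReflTransGen (fun x y => x ∈ S ∧ y ∈ S ∧ Adj x y) c1 c2) :
    ∀ a, c1.1 ≤ a → a < c2.1 → ∃ y, (a, y) ∈ S ∧ (a + 1, y) ∈ S := by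
  induction h using Relation.ReflTransGen.head_induction_on with
  | refl => intro a h1 h2; omega
  | @head x x' step tail ih =>
    obtain ⟨hx, hx', hadj⟩ := step
    intro a h1 h2
    by_cases hc : x'.1 ≤ a
    · exact ih a hc h2
    · push_neg at hc
      have hfst := adj_fst hadj
      have hx1 : x.1 = a := by omega
      have hx'1 : x'.1 = a + 1 := by omega
      rcases hadj with ⟨h1', _⟩ | ⟨hcol, _⟩
      · omega
      · refine ⟨x.2, ?_, ?_⟩
        · rwa [← hx1, Prod.mk.eta]
        · rw [hcol, ← hx'1, Prod.mk.eta]; exact hx'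

end walks

lemma exists_hook_of_borderStrip {p : ℕ} (hp : 0 < p) {lam mu : YoungDiagram}
    (h : IsBorderStrip p lam mu) : ∃ c ∈ lam.cells, hook lam c = p := by
  obtain ⟨hle, hcard, hconn, hno⟩ := h
  set S := lam.cells \ mu.cells with hS
  have hmemS : ∀ a y, (a, y) ∈ S ↔ mu.rowLen a ≤ y ∧ y < lam.rowLen a := by
    intro a y
    rw [hS, Finset.mem_sdiff, memc]
    constructor
    · rintro ⟨h1, h2⟩
      rw [memc] at h2
      omega
    · rintro ⟨h1, h2⟩
      refine ⟨h2, ?_⟩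
      rw [memc]
      omega
  have hne : S.Nonempty := by
    rw [← Finset.card_pos, hcard]; exact hp
  set T := S.image Prod.fst with hT
  have hTne : T.Nonempty := hne.image _
  set i1 := T.min' hTne with hi1
  set i2 := T.max' hTne with hi2
  have hbound : ∀ a y, (a, y) ∈ S → i1 ≤ a ∧ a ≤ i2 := by
    intro a y hay
    have : a ∈ T := Finset.mem_image_of_mem Prod.fst hay
    exact ⟨Finset.min'_le T a this, Finset.le_max' T a this⟩
  obtain ⟨c1, hc1, hc1f⟩ := Finset.mem_image.mp (T.min'_mem hTne)
  obtain ⟨c2, hc2, hc2f⟩ := Finset.mem_image.mp (T.max'_mem hTne)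
  have hle12 : i1 ≤ i2 := by
    rcases c1 with ⟨a, y⟩
    have := hbound a y hc1
    simp only at hc1f
    omega
  have hpath := hconn c1 hc1 c2 hc2
  -- F2 : every row in [i1, i2] meets S
  have F2 : ∀ a, i1 ≤ a → a ≤ i2 → mu.rowLen a < lam.rowLen a := by
    intro a ha1 ha2
    obtain ⟨y, hy⟩ := walk_rows hpath hc1 a (by omega) (by omega)
    have := (hmemS a y).mp hy
    omega
  -- F3
  have F3 : ∀ a, i1 ≤ a → a < i2 → mu.rowLen a + 1 = lam.rowLen (a + 1) := by
    intro a ha1 ha2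
    obtain ⟨y, hy1, hy2⟩ := walk_cross hpath a (by omega) (by omega)
    have e1 := (hmemS a y).mp hy1
    have e2 := (hmemS (a + 1) y).mp hy2
    -- ≤ direction from crossing; ≥ from no 2x2
    by_contra hcne
    have hlt2 : mu.rowLen a + 1 < lam.rowLen (a + 1) := by omega
    set m := mu.rowLen a with hm
    apply hno
    refine ⟨a, m, ?_, ?_, ?_, ?_⟩
    · rw [hmemS]; exact ⟨le_refl _, F2 a ha1 (by omega)⟩
    · rw [hmemS]
      have := rowLen_le_of_le hle a  -- not needed
      have hmu : mu.rowLen (a + 1) ≤ mu.rowLen a := mu.rowLen_anti a (a + 1) (by omega)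
      omega
    · rw [hmemS]
      have hla : lam.rowLen (a + 1) ≤ lam.rowLen a := lam.rowLen_anti a (a + 1) (by omega)
      omega
    · rw [hmemS]
      have hmu : mu.rowLen (a + 1) ≤ mu.rowLen a := mu.rowLen_anti a (a + 1) (by omega)
      omega
  have hmemS' : ∀ a y, (a, y) ∈ S ↔ (i1 ≤ a ∧ a ≤ i2 ∧ mu.rowLen a ≤ y ∧ y < lam.rowLen a) := by
    intro a y
    constructor
    · intro hay
      have hb := hbound a y hay
      have := (hmemS a y).mp hay
      exact ⟨hb.1, hb.2, this.1, this.2⟩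
    · rintro ⟨_, _, h3, h4⟩
      exact (hmemS a y).mpr ⟨h3, h4⟩
  have hcards := card_strip (i2 - i1) i1 i2 S mu.rowLen lam.rowLen rfl hle12 hmemS' F2 F3
  set j := mu.rowLen i2 with hj
  have hcell2 : (i2, j) ∈ lam.cells := memc.mpr (F2 i2 hle12 (le_refl _))
  have hcol : lam.colLen j = i2 + 1 := by
    have h1 : i2 < lam.colLen j := memc'.mp hcell2
    have h2 : ¬ (i2 + 1 < lam.colLen j) := by
      rw [← memc', memc]
      have hrow_empty : ¬ (mu.rowLen (i2 + 1) < lam.rowLen (i2 + 1)) := by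
        intro hcon
        have : (i2 + 1, mu.rowLen (i2 + 1)) ∈ S := (hmemS _ _).mpr ⟨le_refl _, hcon⟩
        have := hbound _ _ this
        omega
      have hmu : mu.rowLen (i2 + 1) ≤ mu.rowLen i2 := mu.rowLen_anti i2 (i2 + 1) (by omega)
      omega
    omega
  have hjlt : j < lam.rowLen i1 := by
    have : mu.rowLen i2 ≤ mu.rowLen i1 := mu.rowLen_anti i1 i2 hle12
    have := F2 i1 (le_refl _) hle12
    omega
  have hcell1 : (i1, j) ∈ lam.cells := memc.mpr hjlt
  refine ⟨(i1, j), hcell1, ?_⟩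
  have := hook_eq hcell1
  rw [hcol] at this
  omega







/-- Row lengths of the diagram obtained by removing the rim hook of `(i,j)`. -/
def stripRow (lam : YoungDiagram) (i j a : ℕ) : ℕ :=
  if a < i then lam.rowLen a
  else min (lam.rowLen a) (max j (lam.rowLen (a + 1) - 1))

lemma stripRow_le (lam : YoungDiagram) (i j a : ℕ) :
    stripRow lam i j a ≤ lam.rowLen a := by
  unfold stripRow; split_ifs <;> omega

lemma stripRow_anti (lam : YoungDiagram) (i j : ℕ) :
    ∀ a b, a ≤ b → stripRow lam i j b ≤ stripRow lam i j a := by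
  have key : ∀ a, stripRow lam i j (a + 1) ≤ stripRow lam i j a := by
    intro a
    have h1 : lam.rowLen (a + 1) ≤ lam.rowLen a := lam.rowLen_anti a (a + 1) (by omega)
    have h2 : lam.rowLen (a + 1 + 1) ≤ lam.rowLen (a + 1) := lam.rowLen_anti (a + 1) (a + 1 + 1) (by omega)
    unfold stripRow
    split_ifs <;> omega
  intro a b hab
  exact antitone_nat_of_succ_le key hab

/-- The diagram obtained from `lam` by removing the rim hook of `(i, j)`. -/
def coreOf (lam : YoungDiagram) (i j : ℕ) : YoungDiagram where
  cells := lam.cells.filter (fun c => c.2 < stripRow lam i j c.1)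
  isLowerSet := by
    rintro ⟨a, b⟩ ⟨a', b'⟩ hle hc
    obtain ⟨h1, h2⟩ : a' ≤ a ∧ b' ≤ b := Prod.mk_le_mk.mp hle
    simp only [Finset.coe_filter, Set.mem_setOf_eq, YoungDiagram.mem_cells] at hc ⊢
    obtain ⟨hmem, hlt⟩ := hc
    refine ⟨lam.up_left_mem h1 h2 hmem, ?_⟩
    calc b' ≤ b := h2
    _ < stripRow lam i j a := hlt
    _ ≤ stripRow lam i j a' := stripRow_anti lam i j a' a h1

lemma mem_coreOf {lam : YoungDiagram} {i j a y : ℕ} :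
    (a, y) ∈ (coreOf lam i j).cells ↔ (a, y) ∈ lam.cells ∧ y < stripRow lam i j a := by
  simp [coreOf, Finset.mem_filter]

lemma borderStrip_of_hook {p : ℕ} (hp : 0 < p) {lam : YoungDiagram} {i j : ℕ}
    (hcell : (i, j) ∈ lam.cells) (hhook : hook lam (i, j) = p) :
    IsBorderStrip p lam (coreOf lam i j) := by
  set A := lam.colLen j - 1 with hA
  have hcolA : lam.colLen j = A + 1 := by
    have := memc'.mp hcell; omega
  have hiA : i ≤ A := by
    have := memc'.mp hcell; omega
  have hA2 : ∀ a, a ≤ A → j < lam.rowLen a := by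
    intro a ha
    have : (a, j) ∈ lam.cells := memc'.mpr (by omega)
    exact memc.mp this
  have hA3 : ∀ a, A < a → lam.rowLen a ≤ j := by
    intro a ha
    have : ¬ ((a, j) ∈ lam.cells) := by rw [memc']; omega
    rw [memc] at this; omega
  have sA : ∀ a, i ≤ a → a < A → stripRow lam i j a = lam.rowLen (a + 1) - 1 := by
    intro a ha1 ha2
    have h1 := hA2 (a + 1) (by omega)
    have h2 : lam.rowLen (a + 1) ≤ lam.rowLen a := lam.rowLen_anti a (a + 1) (by omega)
    unfold stripRow
    rw [if_neg (by omega)]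
    omega
  have sA2 : stripRow lam i j A = j := by
    have h1 := hA3 (A + 1) (by omega)
    have h2 := hA2 A (le_refl _)
    unfold stripRow
    rw [if_neg (by omega)]
    omega
  have slt : ∀ a, i ≤ a → a ≤ A → stripRow lam i j a < lam.rowLen a := by
    intro a ha1 ha2
    rcases Nat.lt_or_ge a A with h | h
    · have e := sA a ha1 h
      have h2 : lam.rowLen (a + 1) ≤ lam.rowLen a := lam.rowLen_anti a (a + 1) (by omega)
      have h3 := hA2 a ha2
      omega
    · have : a = A := by omega
      subst this
      rw [sA2]; exact hA2 A (le_refl _)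
  have srj : ∀ a, i ≤ a → a ≤ A → j ≤ stripRow lam i j a := by
    intro a ha1 ha2
    rcases Nat.lt_or_ge a A with h | h
    · have e := sA a ha1 h
      have h2 := hA2 (a + 1) (by omega)
      omega
    · have : a = A := by omega
      subst this; rw [sA2]
  have sout : ∀ a, (a < i ∨ A < a) → stripRow lam i j a = lam.rowLen a := by
    intro a ha
    rcases ha with h | h
    · unfold stripRow; rw [if_pos h]
    · have h1 := hA3 a h
      unfold stripRow
      rw [if_neg (by omega)]
      omega
  set S := lam.cells \ (coreOf lam i j).cells with hS
  have memS : ∀ a y, (a, y) ∈ S ↔ (i ≤ a ∧ a ≤ A ∧ stripRow lam i j a ≤ y ∧ y < lam.rowLen a) := by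
    intro a y
    rw [hS, Finset.mem_sdiff, mem_coreOf, memc]
    constructor
    · rintro ⟨h1, h2⟩
      have h3 : stripRow lam i j a ≤ y := by
        by_contra hh; push_neg at hh; exact h2 ⟨h1, hh⟩
      rcases Nat.lt_or_ge a i with h | h
      · have := sout a (Or.inl h); omega
      rcases Nat.lt_or_ge A a with h' | h'
      · have := sout a (Or.inr h'); omega
      exact ⟨h, h', h3, h1⟩
    · rintro ⟨h1, h2, h3, h4⟩
      refine ⟨h4, ?_⟩
      rintro ⟨-, hh⟩
      omega
  -- cardinality
  have hstep : ∀ a, i ≤ a → a < A → stripRow lam i j a + 1 = lam.rowLen (a + 1) := by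
    intro a h1 h2
    have e := sA a h1 h2
    have := hA2 (a + 1) (by omega)
    omega
  have hcards : S.card = (lam.rowLen i - stripRow lam i j A) + (A - i) :=
    card_strip (A - i) i A S (stripRow lam i j) lam.rowLen rfl hiA memS slt hstep
  have hcardp : S.card = p := by
    have he := hook_eq hcell
    rw [hcolA] at he
    rw [hcards, sA2]
    have := hA2 i hiA
    omega
  -- no 2x2
  have hno : ¬ ∃ x y : ℕ, (x, y) ∈ S ∧ (x + 1, y) ∈ S ∧
      (x, y + 1) ∈ S ∧ (x + 1, y + 1) ∈ S := by
    rintro ⟨x, y, h1, -, -, h4⟩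
    rw [memS] at h1 h4
    obtain ⟨hx1, hx2, hx3, hx4⟩ := h1
    obtain ⟨hy1, hy2, hy3, hy4⟩ := h4
    have hxA : x < A := by omega
    have := sA x hx1 hxA
    omega
  -- connectivity
  set rel := (fun x y => x ∈ S ∧ y ∈ S ∧ Adj x y) with hrel
  have hrelsymm : Symmetric rel := by
    rintro x y ⟨h1, h2, h3⟩
    refine ⟨h2, h1, ?_⟩
    unfold Adj at h3 ⊢
    tauto
  have conn0 : ∀ n a y, (a, y) ∈ S → (A - a) + (y - j) = n →
      Relation.ReflTransGen rel (a, y) (A, j) := by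
    intro n
    induction n with
    | zero =>
      intro a y hay hm
      rw [memS] at hay
      have hj := srj a hay.1 hay.2.1
      obtain ⟨e1, e2⟩ : a = A ∧ y = j := by omega
      rw [e1, e2]
    | succ m ih =>
      intro a y hay hm
      have hay' := (memS a y).mp hay
      obtain ⟨h1, h2, h3, h4⟩ := hay'
      have hjle : j ≤ stripRow lam i j a := srj a h1 h2
      rcases Nat.lt_or_ge (stripRow lam i j a) y with hc | hc
      · -- move left
        have hmem : (a, y - 1) ∈ S := by
          rw [memS]; omega
        have hadj : Adj (a, y) (a, y - 1) := by
          unfold Adj; left; exact ⟨rfl, Or.inr (by omega)⟩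
        exact Relation.ReflTransGen.head ⟨hay, hmem, hadj⟩ (ih a (y - 1) hmem (by omega))
      · -- y = stripRow a
        have hya : y = stripRow lam i j a := by omega
        have haA : a < A := by
          by_contra hcon
          have : a = A := by omega
          subst this
          rw [sA2] at hya
          omega
        have hsA := sA a h1 haA
        have hmem : (a + 1, y) ∈ S := by
          rw [memS]
          have h5 := slt (a + 1) (by omega) (by omega)
          have h6 : stripRow lam i j (a + 1) ≤ stripRow lam i j a := stripRow_anti lam i j a (a + 1) (by omega)
          have h7 := hA2 (a + 1) (by omega)
          omega
        have hadj : Adj (a, y) (a + 1, y) := by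
          unfold Adj; right; exact ⟨rfl, Or.inl rfl⟩
        exact Relation.ReflTransGen.head ⟨hay, hmem, hadj⟩ (ih (a + 1) y hmem (by omega))
  have hconn : ∀ a ∈ S, ∀ b ∈ S, Relation.ReflTransGen rel a b := by
    rintro ⟨a, y⟩ ha ⟨b, z⟩ hb
    have t1 := conn0 _ a y ha rfl
    have t2 := conn0 _ b z hb rfl
    exact t1.trans ((@Relation.ReflTransGen.stdSymm _ rel ⟨hrelsymm⟩).symm _ _ t2)
  refine ⟨?_, hcardp, hconn, ?_⟩
  · rw [← YoungDiagram.cells_subset_iff]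
    exact Finset.filter_subset _ _
  · exact hno





/-- First-column hook length (beta number) of row `i`. -/
def Bval (lam : YoungDiagram) (i : ℕ) : ℕ :=
  lam.rowLen i + (lam.colLen 0 - i - 1)

/-- `x` is a beta number of `lam`. -/
def inB (lam : YoungDiagram) (x : ℕ) : Prop :=
  ∃ i, i < lam.colLen 0 ∧ Bval lam i = x

/-- Column content `cc j = j + d - colLen j`. -/
def cc (lam : YoungDiagram) (j : ℕ) : ℕ :=
  j + (lam.colLen 0 - lam.colLen j)

lemma colLen_le_d (lam : YoungDiagram) (j : ℕ) : lam.colLen j ≤ lam.colLen 0 :=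
  lam.colLen_anti 0 j (Nat.zero_le _)

lemma mem_tr {lam : YoungDiagram} {i j : ℕ} (h1 : j < lam.rowLen i) : i < lam.colLen j :=
  memc'.mp (memc.mpr h1)

lemma mem_tr' {lam : YoungDiagram} {i j : ℕ} (h1 : i < lam.colLen j) : j < lam.rowLen i :=
  memc.mp (memc'.mpr h1)

lemma A1 {lam : YoungDiagram} {i j : ℕ} (h : (i, j) ∈ lam.cells) :
    Bval lam i = hook lam (i, j) + cc lam j := by
  have h1 : j < lam.rowLen i := memc.mp h
  have h2 : i < lam.colLen j := memc'.mp h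
  have h3 := colLen_le_d lam j
  have h4 := hook_eq h
  unfold Bval cc
  omega

lemma A2 {lam : YoungDiagram} {i j : ℕ} (h : (i, j) ∈ lam.cells) :
    ¬ inB lam (cc lam j) := by
  rintro ⟨i', hi', he⟩
  have h2 : i < lam.colLen j := memc'.mp h
  have h3 := colLen_le_d lam j
  unfold Bval cc at he
  rcases Nat.lt_or_ge j (lam.rowLen i') with hc | hc
  · have := mem_tr hc
    omega
  · have : ¬ (i' < lam.colLen j) := fun hcon => by have := mem_tr' hcon; omega
    omega

lemma A3 {lam : YoungDiagram} {i' p : ℕ} (hp : 0 < p) (hi' : i' < lam.colLen 0)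
    {x : ℕ} (hB : Bval lam i' = x + p) (hx : ¬ inB lam x) :
    ∃ j', (i', j') ∈ lam.cells ∧ hook lam (i', j') = p := by
  classical
  have cc0 : cc lam 0 = 0 := by unfold cc; omega
  have ccge : ∀ j, j ≤ cc lam j := by intro j; unfold cc; omega
  set jm := Nat.findGreatest (fun j => cc lam j ≤ x) x with hjm
  have hspec : cc lam jm ≤ x := by
    rw [hjm]
    exact Nat.findGreatest_spec (P := fun j => cc lam j ≤ x) (Nat.zero_le x)
      (by change cc lam 0 ≤ x; rw [cc0]; exact Nat.zero_le _)
  have hgt : x < cc lam (jm + 1) := by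
    rcases le_or_gt (jm + 1) x with hc | hc
    · have h6 : ¬ (cc lam (jm + 1) ≤ x) :=
        Nat.findGreatest_is_greatest (P := fun j => cc lam j ≤ x) (k := jm + 1)
          (by rw [← hjm]; omega) hc
      omega
    · have := ccge (jm + 1)
      omega
  rcases Nat.eq_or_lt_of_le hspec with heq | hlt
  · -- cc jm = x exactly
    have hmem : (i', jm) ∈ lam.cells := by
      rw [memc]
      by_contra hcon
      push_neg at hcon
      have hcol : lam.colLen jm ≤ i' := by
        by_contra hcon2
        push_neg at hcon2
        have := mem_tr' hcon2
        omega
      have h3 := colLen_le_d lam jm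
      unfold Bval at hB
      unfold cc at heq
      omega
    refine ⟨jm, hmem, ?_⟩
    have := A1 hmem
    omega
  · -- x strictly between cc jm and cc (jm+1) : x is a beta number, contradiction
    exfalso
    apply hx
    have h3 := colLen_le_d lam jm
    have h4 := colLen_le_d lam (jm + 1)
    have h5 : lam.colLen (jm + 1) ≤ lam.colLen jm := lam.colLen_anti jm (jm + 1) (by omega)
    set i'' := jm + lam.colLen 0 - x with hi''
    unfold cc at hlt hgt
    have hc1 : i'' < lam.colLen jm := by omega
    have hc2 : lam.colLen (jm + 1) ≤ i'' := by omega
    have hr1 : jm < lam.rowLen i'' := mem_tr' hc1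
    have hr2 : ¬ (jm + 1 < lam.rowLen i'') := fun hcon => by
      have := mem_tr hcon
      omega
    refine ⟨i'', by omega, ?_⟩
    unfold Bval
    omega

lemma descent {lam : YoungDiagram} {p : ℕ} (hp : 0 < p) :
    ∀ k, 0 < k → ∀ i' x, i' < lam.colLen 0 → Bval lam i' = x + k * p → ¬ inB lam x →
    ∃ i'' y, i'' < lam.colLen 0 ∧ Bval lam i'' = y + p ∧ ¬ inB lam y := by
  intro k
  induction k with
  | zero => omega
  | succ m ih =>
    intro _ i' x hi' hB hx
    have hmul : (m + 1) * p = m * p + p := by ring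
    rcases Nat.eq_zero_or_pos m with hm | hm
    · subst hm
      exact ⟨i', x, hi', by omega, hx⟩
    · by_cases hc : inB lam (x + m * p)
      · obtain ⟨i2, hi2, he2⟩ := hc
        exact ih hm i2 x hi2 he2 hx
      · exact ⟨i', x + m * p, hi', by omega, hc⟩


/-- A partition is a `p`-core iff none of its hook lengths is divisible by `p`. -/
theorem isPCore_iff_no_hook_divisible (p : ℕ) (hp : 0 < p) (lam : YoungDiagram) :
    IsPCore p lam ↔ ∀ cell ∈ lam.cells, ¬ p ∣ hook lam cell := by
  constructor
  · intro hcore cell hcell hdvd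
    rcases cell with ⟨i, j⟩
    obtain ⟨k, hk⟩ := hdvd
    have hpos := hook_pos hcell
    have hklt : 0 < k := by
      rcases Nat.eq_zero_or_pos k with h | h
      · subst h; simp at hk; omega
      · exact h
    have hi : i < lam.colLen 0 := lt_of_lt_of_le (memc'.mp hcell) (colLen_le_d lam j)
    have hA1 := A1 hcell
    have hA2 := A2 hcell
    have hBeq : Bval lam i = cc lam j + k * p := by
      rw [hA1, hk]; ring
    obtain ⟨i'', y, h1, h2, h3⟩ := descent hp k hklt i (cc lam j) hi hBeq hA2
    obtain ⟨j', hc', hh'⟩ := A3 hp h1 h2 h3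
    exact hcore ⟨coreOf lam i'' j', borderStrip_of_hook hp hc' hh'⟩
  · rintro hall ⟨mu, hbs⟩
    obtain ⟨c, hc, hcp⟩ := exists_hook_of_borderStrip hp hbs
    exact hall c hc (by rw [hcp])
end

section
/- For a partition λ with p-modular Maya decomposition M^{(0)}, ..., M^{(p-1)} of its charge-zero Maya diagram, the product of all hook lengths of λ factorizes as H(λ) = ∏_i ∏_{m∈M^{(i)}, n∉M^{(i)}, m>n} p(m−n) times ∏_{i≠j} ∏_{m∈M^{(i)}, n∉M^{(j)}, pm+i>pn+j} ((pm+i)−(pn+j)); the first factor is the product of the hook lengths divisible by p and the second is the product of those not divisible by p. -/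
open scoped BigOperators

/-- The `i`-th Maya diagram in the `p`-modular decomposition of the charge-zero
Maya diagram of `μ`. -/
def quotientSet (p : ℕ) (μ : YoungDiagram) (i : Fin p) : Set ℤ :=
  {m | (p : ℤ) * m + (i : ℤ) ∈ mayaHat μ}

namespace MayaAux

variable (μ : YoungDiagram)

/-- bead positions -/
def fI (i : ℕ) : ℤ := (μ.rowLen i : ℤ) - (i + 1)

/-- gap positions -/
def gI (c : ℕ) : ℤ := (c : ℤ) - (μ.colLen c : ℤ)

lemma fI_strictAnti : StrictAnti (fI μ) := by
  apply strictAnti_nat_of_succ_lt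
  intro n
  have := μ.rowLen_anti n (n+1) (by omega)
  unfold fI
  push_cast
  omega

lemma gI_strictMono : StrictMono (gI μ) := by
  apply strictMono_nat_of_lt_succ
  intro n
  have := μ.colLen_anti n (n+1) (by omega)
  unfold gI
  push_cast
  omega

lemma fI_ne_gI (i c : ℕ) : fI μ i ≠ gI μ c := by
  unfold fI gI
  by_cases h : (i, c) ∈ μ
  · have h1 : c < μ.rowLen i := YoungDiagram.mem_iff_lt_rowLen.mp h
    have h2 : i < μ.colLen c := YoungDiagram.mem_iff_lt_colLen.mp h
    push_cast
    omega
  · have h1 : ¬ c < μ.rowLen i := fun hc => h (YoungDiagram.mem_iff_lt_rowLen.mpr hc)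
    have h2 : ¬ i < μ.colLen c := fun hc => h (YoungDiagram.mem_iff_lt_colLen.mpr hc)
    push_cast
    omega

lemma fI_mem_Icc {i : ℕ} (hi : i < μ.colLen 0) :
    fI μ i ∈ Set.Icc (-(μ.colLen 0 : ℤ)) ((μ.rowLen 0 : ℤ) - 1) := by
  have h1 : 0 < μ.rowLen i := by
    rw [← YoungDiagram.mem_iff_lt_rowLen]
    exact YoungDiagram.mem_iff_lt_colLen.mpr hi
  have h2 : μ.rowLen i ≤ μ.rowLen 0 := μ.rowLen_anti 0 i (by omega)
  unfold fI
  constructor <;> push_cast <;> omega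

lemma gI_mem_Icc {c : ℕ} (hc : c < μ.rowLen 0) :
    gI μ c ∈ Set.Icc (-(μ.colLen 0 : ℤ)) ((μ.rowLen 0 : ℤ) - 1) := by
  have h2 : μ.colLen c ≤ μ.colLen 0 := μ.colLen_anti 0 c (by omega)
  unfold gI
  constructor <;> push_cast <;> omega

lemma total (x : ℤ) : (∃ i, x = fI μ i) ∨ (∃ c, x = gI μ c) := by
  by_cases hw : (μ.rowLen 0 : ℤ) ≤ x
  · right
    refine ⟨x.toNat, ?_⟩
    have hx0 : 0 ≤ x := le_trans (by positivity) hw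
    have : μ.colLen x.toNat = 0 := by
      by_contra h
      have : (0, x.toNat) ∈ μ := YoungDiagram.mem_iff_lt_colLen.mpr (by omega)
      have := YoungDiagram.mem_iff_lt_rowLen.mp this
      omega
    unfold gI
    rw [this]
    omega
  by_cases hl : x ≤ -(μ.colLen 0 : ℤ) - 1
  · left
    refine ⟨(-x-1).toNat, ?_⟩
    have hx : (μ.colLen 0 : ℤ) ≤ -x-1 := by omega
    have : μ.rowLen (-x-1).toNat = 0 := by
      by_contra h
      have : ((-x-1).toNat, 0) ∈ μ := YoungDiagram.mem_iff_lt_rowLen.mpr (by omega)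
      have := YoungDiagram.mem_iff_lt_colLen.mp this
      omega
    unfold fI
    rw [this]
    omega
  · -- counting argument on Icc
    set l := μ.colLen 0 with hldef
    set w := μ.rowLen 0 with hwdef
    set A : Finset ℤ := ((Finset.range l).image (fI μ)) ∪ ((Finset.range w).image (gI μ)) with hA
    have hsub : A ⊆ Finset.Icc (-(l:ℤ)) ((w:ℤ)-1) := by
      intro y hy
      simp only [hA, Finset.mem_union, Finset.mem_image, Finset.mem_range] at hy
      rcases hy with ⟨i, hi, rfl⟩ | ⟨c, hc, rfl⟩
      · simpa [Finset.mem_Icc] using (fI_mem_Icc μ hi)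
      · simpa [Finset.mem_Icc] using (gI_mem_Icc μ hc)
    have hcard : (Finset.Icc (-(l:ℤ)) ((w:ℤ)-1)).card ≤ A.card := by
      have hd : Disjoint ((Finset.range l).image (fI μ)) ((Finset.range w).image (gI μ)) := by
        rw [Finset.disjoint_left]
        rintro y hy1 hy2
        simp only [Finset.mem_image, Finset.mem_range] at hy1 hy2
        obtain ⟨i, _, rfl⟩ := hy1
        obtain ⟨c, _, hc⟩ := hy2
        exact fI_ne_gI μ i c hc.symm
      rw [hA, Finset.card_union_of_disjoint hd,
        Finset.card_image_of_injective _ (fI_strictAnti μ).injective,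
        Finset.card_image_of_injective _ (gI_strictMono μ).injective,
        Finset.card_range, Finset.card_range, Int.card_Icc]
      omega
    have hAeq : A = Finset.Icc (-(l:ℤ)) ((w:ℤ)-1) :=
      Finset.eq_of_subset_of_card_le hsub hcard
    have hx : x ∈ A := by
      rw [hAeq, Finset.mem_Icc]
      omega
    simp only [hA, Finset.mem_union, Finset.mem_image, Finset.mem_range] at hx
    rcases hx with ⟨i, _, h⟩ | ⟨c, _, h⟩
    · exact Or.inl ⟨i, h.symm⟩
    · exact Or.inr ⟨c, h.symm⟩

lemma mem_mayaHat_iff (x : ℤ) : x ∈ mayaHat μ ↔ ∃ i, x = fI μ i := Iff.rfl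

lemma notMem_mayaHat_iff (x : ℤ) : x ∉ mayaHat μ ↔ ∃ c, x = gI μ c := by
  constructor
  · intro h
    rcases total μ x with h' | h'
    · exact absurd h' h
    · exact h'
  · rintro ⟨c, rfl⟩ ⟨i, hi⟩
    exact fI_ne_gI μ i c hi.symm


-- PART 2
lemma mem_iff_gI_lt_fI {r c : ℕ} : (r, c) ∈ μ ↔ gI μ c < fI μ r := by
  unfold fI gI
  by_cases h : (r, c) ∈ μ
  · have h1 : c < μ.rowLen r := YoungDiagram.mem_iff_lt_rowLen.mp h
    have h2 : r < μ.colLen c := YoungDiagram.mem_iff_lt_colLen.mp h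
    simp only [h, true_iff]
    omega
  · have h1 : ¬ c < μ.rowLen r := fun hc => h (YoungDiagram.mem_iff_lt_rowLen.mpr hc)
    have h2 : ¬ r < μ.colLen c := fun hc => h (YoungDiagram.mem_iff_lt_colLen.mpr hc)
    simp only [h, false_iff, not_lt]
    omega

lemma hook_eq {c : ℕ × ℕ} (h : c ∈ μ.cells) :
    (hook μ c : ℤ) = fI μ c.1 - gI μ c.2 := by
  obtain ⟨r, j⟩ := c
  rw [YoungDiagram.mem_cells] at h
  have h1 : j < μ.rowLen r := YoungDiagram.mem_iff_lt_rowLen.mp h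
  have h2 : r < μ.colLen j := YoungDiagram.mem_iff_lt_colLen.mp h
  unfold hook fI gI
  simp only
  omega

/-- The set of pairs (m, n) with m a bead, n a gap, n < m. -/
def pairSet : Set (ℤ × ℤ) :=
  {mn | mn.1 ∈ mayaHat μ ∧ mn.2 ∉ mayaHat μ ∧ mn.2 < mn.1}

lemma pairSet_finite : (pairSet μ).Finite := by
  apply Set.Finite.subset
    (Set.Finite.prod (Set.finite_Icc (-(μ.colLen 0 : ℤ)) ((μ.rowLen 0 : ℤ) - 1))
      (Set.finite_Icc (-(μ.colLen 0 : ℤ)) ((μ.rowLen 0 : ℤ) - 1)))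
  rintro ⟨m, n⟩ ⟨hm, hn, hlt⟩
  obtain ⟨i, rfl⟩ := (mem_mayaHat_iff μ m).mp hm
  obtain ⟨c, rfl⟩ := (notMem_mayaHat_iff μ n).mp hn
  have hub : fI μ i ≤ (μ.rowLen 0 : ℤ) - 1 := by
    have := μ.rowLen_anti 0 i (by omega)
    unfold fI; push_cast; omega
  have hlb : -(μ.colLen 0 : ℤ) ≤ gI μ c := by
    have := μ.colLen_anti 0 c (by omega)
    unfold gI; push_cast; omega
  constructor
  · exact ⟨by simpa using le_trans hlb (le_of_lt hlt), hub⟩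
  · exact ⟨hlb, le_trans (le_of_lt hlt) hub⟩

noncomputable def invF : ℤ → ℕ := Function.invFun (fI μ)
noncomputable def invG : ℤ → ℕ := Function.invFun (gI μ)

lemma fI_invF {x : ℤ} (h : x ∈ mayaHat μ) : fI μ (invF μ x) = x := by
  obtain ⟨i, rfl⟩ := (mem_mayaHat_iff μ x).mp h
  exact Function.invFun_eq ⟨i, rfl⟩

lemma gI_invG {x : ℤ} (h : x ∉ mayaHat μ) : gI μ (invG μ x) = x := by
  obtain ⟨c, rfl⟩ := (notMem_mayaHat_iff μ x).mp h
  exact Function.invFun_eq ⟨c, rfl⟩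

/-- Master product lemma: hooks filtered by any predicate correspond to pair differences. -/
lemma prod_hook_eq (q : ℤ → Prop) [DecidablePred q] :
    ∏ c ∈ μ.cells.filter (fun c => q (hook μ c)), (hook μ c : ℤ) =
      ∏ mn ∈ (pairSet_finite μ).toFinset.filter (fun mn => q (mn.1 - mn.2)),
        (mn.1 - mn.2) := by
  apply Finset.prod_nbij' (fun c => (fI μ c.1, gI μ c.2))
    (fun mn => (invF μ mn.1, invG μ mn.2))
  · rintro ⟨r, c⟩ hrc
    rw [Finset.mem_filter] at hrc ⊢
    obtain ⟨hmem, hq⟩ := hrc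
    rw [YoungDiagram.mem_cells] at hmem
    have hval := hook_eq μ ((YoungDiagram.mem_cells _).mpr hmem)
    refine ⟨?_, ?_⟩
    · rw [Set.Finite.mem_toFinset]
      exact ⟨⟨r, rfl⟩, (notMem_mayaHat_iff μ _).mpr ⟨c, rfl⟩,
        (mem_iff_gI_lt_fI μ).mp hmem⟩
    · rw [← hval]; exact hq
  · rintro ⟨m, n⟩ hmn
    rw [Finset.mem_filter, Set.Finite.mem_toFinset] at hmn
    obtain ⟨⟨hm, hn, hlt⟩, hq⟩ := hmn
    rw [Finset.mem_filter]
    have h1 := fI_invF μ hm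
    have h2 := gI_invG μ hn
    have hmem : (invF μ m, invG μ n) ∈ μ := by
      rw [mem_iff_gI_lt_fI, h1, h2]; exact hlt
    refine ⟨(YoungDiagram.mem_cells _).mpr hmem, ?_⟩
    have hval := hook_eq μ ((YoungDiagram.mem_cells _).mpr hmem)
    simp only [h1, h2] at hval
    have : (hook μ (invF μ m, invG μ n) : ℤ) = m - n := hval
    have hnn : hook μ (invF μ m, invG μ n) = (m - n).toNat := by omega
    rw [hnn]
    rwa [Int.toNat_of_nonneg (by omega)]
  · rintro ⟨r, c⟩ hrc
    rw [Finset.mem_filter] at hrc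
    have hmem := (YoungDiagram.mem_cells _).mp hrc.1
    simp only [invF, invG, Prod.mk.injEq]
    exact ⟨Function.leftInverse_invFun (fI_strictAnti μ).injective r,
      Function.leftInverse_invFun (gI_strictMono μ).injective c⟩
  · rintro ⟨m, n⟩ hmn
    rw [Finset.mem_filter, Set.Finite.mem_toFinset] at hmn
    obtain ⟨⟨hm, hn, _⟩, _⟩ := hmn
    simp only [Prod.mk.injEq]
    exact ⟨fI_invF μ hm, gI_invG μ hn⟩
  · rintro ⟨r, c⟩ hrc
    rw [Finset.mem_filter] at hrc
    exact hook_eq μ hrc.1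


-- PART 3
variable (p : ℕ)

def D2set (i j : Fin p) : Set (ℤ × ℤ) :=
  {mn : ℤ × ℤ | mn.1 ∈ quotientSet p μ i ∧ mn.2 ∉ quotientSet p μ j ∧
      (p : ℤ) * mn.2 + (j : ℤ) < (p : ℤ) * mn.1 + (i : ℤ)}

def Dset (i : Fin p) : Set (ℤ × ℤ) :=
  {mn : ℤ × ℤ | mn.1 ∈ quotientSet p μ i ∧ mn.2 ∉ quotientSet p μ i ∧ mn.2 < mn.1}

def psi (i j : Fin p) (mn : ℤ × ℤ) : ℤ × ℤ :=
  ((p:ℤ) * mn.1 + (i : ℤ), (p:ℤ) * mn.2 + (j : ℤ))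

lemma psi_injective (i j : Fin p) : Function.Injective (psi p i j) := by
  have hp' : (0:ℤ) < p := by exact_mod_cast i.pos
  rintro ⟨m, n⟩ ⟨m', n'⟩ h
  simp only [psi, Prod.mk.injEq] at h
  have h1 : (p:ℤ) * m = (p:ℤ) * m' := by omega
  have h2 : (p:ℤ) * n = (p:ℤ) * n' := by omega
  have := mul_left_cancel₀ (ne_of_gt hp') h1
  have := mul_left_cancel₀ (ne_of_gt hp') h2
  simp_all

lemma D2set_eq_preimage (i j : Fin p) : D2set μ p i j = psi p i j ⁻¹' pairSet μ := rfl

lemma D2set_finite (i j : Fin p) : (D2set μ p i j).Finite := by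
  rw [D2set_eq_preimage]
  exact Set.Finite.preimage (Function.Injective.injOn (psi_injective p i j))
    (pairSet_finite μ)

lemma Dset_eq_preimage (i : Fin p) : Dset μ p i = psi p i i ⁻¹' pairSet μ := by
  have hp' : (0:ℤ) < p := by exact_mod_cast i.pos
  ext ⟨m, n⟩
  simp only [Dset, pairSet, psi, Set.mem_setOf_eq, Set.mem_preimage]
  constructor
  · rintro ⟨h1, h2, h3⟩
    exact ⟨h1, h2, by nlinarith⟩
  · rintro ⟨h1, h2, h3⟩
    refine ⟨h1, h2, ?_⟩
    nlinarith

lemma Dset_finite (i : Fin p) : (Dset μ p i).Finite := by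
  rw [Dset_eq_preimage]
  exact Set.Finite.preimage (Function.Injective.injOn (psi_injective p i i))
    (pairSet_finite μ)

lemma emod_cast_fin (i : Fin p) : ((i : ℕ) : ℤ) % (p:ℤ) = ((i : ℕ) : ℤ) := by
  apply Int.emod_eq_of_lt (by positivity)
  exact_mod_cast i.isLt

lemma psi_fst_emod (i : Fin p) (m : ℤ) : ((p:ℤ) * m + (i:ℤ)) % (p:ℤ) = (i:ℤ) := by
  rw [add_comm, mul_comm, Int.add_mul_emod_self_right]
  exact emod_cast_fin p i

lemma div_p_recover (i : Fin p) {m : ℤ} (h : m % (p:ℤ) = (i:ℤ)) :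
    (p:ℤ) * ((m - (i:ℤ)) / (p:ℤ)) + (i:ℤ) = m := by
  have hp' : (0:ℤ) < p := by exact_mod_cast i.pos
  have hd : (p:ℤ) ∣ (m - (i:ℤ)) := by
    rw [Int.dvd_iff_emod_eq_zero, Int.sub_emod, h, emod_cast_fin, sub_self, Int.zero_emod]
  rw [Int.mul_ediv_cancel' hd]
  ring

/-- Per-fiber bijection, diagonal case. -/
lemma prodA (i : Fin p) :
    ∏ mn ∈ (Dset_finite μ p i).toFinset, ((p:ℤ) * (mn.1 - mn.2)) =
    ∏ mn ∈ (pairSet_finite μ).toFinset.filter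
        (fun mn => mn.1 % (p:ℤ) = (i:ℤ) ∧ mn.2 % (p:ℤ) = (i:ℤ)), (mn.1 - mn.2) := by
  have hp' : (0:ℤ) < p := by exact_mod_cast i.pos
  apply Finset.prod_nbij' (psi p i i)
    (fun mn => ((mn.1 - (i:ℤ)) / (p:ℤ), (mn.2 - (i:ℤ)) / (p:ℤ)))
  · rintro ⟨m, n⟩ hmn
    rw [Set.Finite.mem_toFinset] at hmn
    rw [Finset.mem_filter, Set.Finite.mem_toFinset]
    have : (m, n) ∈ psi p i i ⁻¹' pairSet μ := by rw [← Dset_eq_preimage]; exact hmn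
    exact ⟨this, psi_fst_emod p i m, psi_fst_emod p i n⟩
  · rintro ⟨m, n⟩ hmn
    rw [Finset.mem_filter, Set.Finite.mem_toFinset] at hmn
    obtain ⟨hmem, h1, h2⟩ := hmn
    rw [Set.Finite.mem_toFinset, Dset_eq_preimage]
    have e1 := div_p_recover p i h1
    have e2 := div_p_recover p i h2
    show psi p i i _ ∈ pairSet μ
    simp only [psi, e1, e2]
    exact hmem
  · rintro ⟨m, n⟩ hmn
    simp only [psi, Prod.mk.injEq, add_sub_cancel_right]
    exact ⟨Int.mul_ediv_cancel_left m (ne_of_gt hp'),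
      Int.mul_ediv_cancel_left n (ne_of_gt hp')⟩
  · rintro ⟨m, n⟩ hmn
    rw [Finset.mem_filter, Set.Finite.mem_toFinset] at hmn
    obtain ⟨hmem, h1, h2⟩ := hmn
    simp only [psi, Prod.mk.injEq]
    exact ⟨div_p_recover p i h1, div_p_recover p i h2⟩
  · rintro ⟨m, n⟩ hmn
    simp only [psi]
    ring

/-- Per-fiber bijection, off-diagonal case. -/
lemma prodB (i j : Fin p) :
    ∏ mn ∈ (D2set_finite μ p i j).toFinset,
        (((p:ℤ) * mn.1 + (i:ℤ)) - ((p:ℤ) * mn.2 + (j:ℤ))) =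
    ∏ mn ∈ (pairSet_finite μ).toFinset.filter
        (fun mn => mn.1 % (p:ℤ) = (i:ℤ) ∧ mn.2 % (p:ℤ) = (j:ℤ)), (mn.1 - mn.2) := by
  have hp' : (0:ℤ) < p := by exact_mod_cast i.pos
  apply Finset.prod_nbij' (psi p i j)
    (fun mn => ((mn.1 - (i:ℤ)) / (p:ℤ), (mn.2 - (j:ℤ)) / (p:ℤ)))
  · rintro ⟨m, n⟩ hmn
    rw [Set.Finite.mem_toFinset] at hmn
    rw [Finset.mem_filter, Set.Finite.mem_toFinset]
    exact ⟨hmn, psi_fst_emod p i m, psi_fst_emod p j n⟩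
  · rintro ⟨m, n⟩ hmn
    rw [Finset.mem_filter, Set.Finite.mem_toFinset] at hmn
    obtain ⟨hmem, h1, h2⟩ := hmn
    rw [Set.Finite.mem_toFinset, D2set_eq_preimage]
    have e1 := div_p_recover p i h1
    have e2 := div_p_recover p j h2
    show psi p i j _ ∈ pairSet μ
    simp only [psi, e1, e2]
    exact hmem
  · rintro ⟨m, n⟩ hmn
    simp only [psi, Prod.mk.injEq, add_sub_cancel_right]
    exact ⟨Int.mul_ediv_cancel_left m (ne_of_gt hp'),
      Int.mul_ediv_cancel_left n (ne_of_gt hp')⟩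
  · rintro ⟨m, n⟩ hmn
    rw [Finset.mem_filter, Set.Finite.mem_toFinset] at hmn
    obtain ⟨hmem, h1, h2⟩ := hmn
    simp only [psi, Prod.mk.injEq]
    exact ⟨div_p_recover p i h1, div_p_recover p j h2⟩
  · rintro ⟨m, n⟩ hmn
    simp only [psi]


-- PART 4: assembly
variable (hp : 0 < p)

/-- residue map -/
def rho (x : ℤ) : Fin p :=
  ⟨(x % (p:ℤ)).toNat, by
    have h0 : 0 ≤ x % (p:ℤ) := Int.emod_nonneg x (by exact_mod_cast hp.ne')
    have h1 : x % (p:ℤ) < (p:ℤ) := Int.emod_lt_of_pos x (by exact_mod_cast hp)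
    omega⟩

lemma rho_eq_iff (x : ℤ) (i : Fin p) : rho p hp x = i ↔ x % (p:ℤ) = (i:ℤ) := by
  have h0 : 0 ≤ x % (p:ℤ) := Int.emod_nonneg x (by exact_mod_cast hp.ne')
  rw [Fin.ext_iff]
  simp only [rho]
  omega

lemma dvd_sub_iff (m n : ℤ) : (p:ℤ) ∣ (m - n) ↔ m % (p:ℤ) = n % (p:ℤ) := by
  rw [Int.emod_eq_emod_iff_emod_sub_eq_zero, Int.dvd_iff_emod_eq_zero]

lemma prod_part1 (hp : 0 < p) :
    (∏ c ∈ μ.cells.filter (fun c => p ∣ hook μ c), (hook μ c : ℤ)) =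
      ∏ i : Fin p, ∏ mn ∈ (Dset_finite μ p i).toFinset, ((p:ℤ) * (mn.1 - mn.2)) := by
  have key := prod_hook_eq μ (fun z => (p:ℤ) ∣ z)
  have hfilter : μ.cells.filter (fun c => p ∣ hook μ c)
      = μ.cells.filter (fun c => (p:ℤ) ∣ (hook μ c : ℤ)) := by
    apply Finset.filter_congr
    intro c _
    exact_mod_cast (Int.natCast_dvd_natCast (m := p) (n := hook μ c)).symm
  rw [hfilter, key]
  rw [← Finset.prod_fiberwise ((pairSet_finite μ).toFinset.filter
      (fun mn => (p:ℤ) ∣ (mn.1 - mn.2))) (fun mn => rho p hp mn.1) (fun mn => mn.1 - mn.2)]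
  apply Finset.prod_congr rfl
  intro i _
  rw [prodA, Finset.filter_filter]
  refine Finset.prod_congr (Finset.filter_congr ?_) (fun _ _ => rfl)
  intro mn _
  rw [rho_eq_iff]
  constructor
  · rintro ⟨hd, h1⟩
    exact ⟨h1, ((dvd_sub_iff p mn.1 mn.2).mp hd).symm.trans h1⟩
  · rintro ⟨h1, h2⟩
    exact ⟨(dvd_sub_iff p mn.1 mn.2).mpr (h1.trans h2.symm), h1⟩

lemma prod_part2 (hp : 0 < p) :
    (∏ c ∈ μ.cells.filter (fun c => ¬ p ∣ hook μ c), (hook μ c : ℤ)) =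
      ∏ i : Fin p, ∏ j ∈ Finset.univ.erase i,
        ∏ mn ∈ (D2set_finite μ p i j).toFinset,
          (((p:ℤ) * mn.1 + (i:ℤ)) - ((p:ℤ) * mn.2 + (j:ℤ))) := by
  have key := prod_hook_eq μ (fun z => ¬ (p:ℤ) ∣ z)
  have hfilter : μ.cells.filter (fun c => ¬ p ∣ hook μ c)
      = μ.cells.filter (fun c => ¬ (p:ℤ) ∣ (hook μ c : ℤ)) := by
    apply Finset.filter_congr
    intro c _
    constructor
    · intro h hc; exact h (by exact_mod_cast hc)
    · intro h hc; exact h (by exact_mod_cast hc)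
  rw [hfilter, key]
  set s := (pairSet_finite μ).toFinset.filter (fun mn => ¬ (p:ℤ) ∣ (mn.1 - mn.2)) with hs
  rw [← Finset.prod_fiberwise s (fun mn => (rho p hp mn.1, rho p hp mn.2))
    (fun mn => mn.1 - mn.2)]
  rw [Fintype.prod_prod_type]
  apply Finset.prod_congr rfl
  intro i _
  -- per i : ∏ j : Fin p, fiber = ∏ j in erase i
  have hdiag : ∏ mn ∈ s.filter (fun mn => (rho p hp mn.1, rho p hp mn.2) = (i, i)),
      (mn.1 - mn.2) = 1 := by
    rw [Finset.filter_false_of_mem, Finset.prod_empty]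
    rintro mn hmn h
    rw [hs, Finset.mem_filter] at hmn
    simp only [Prod.mk.injEq] at h
    apply hmn.2
    rw [dvd_sub_iff, (rho_eq_iff p hp _ _).mp h.1, (rho_eq_iff p hp _ _).mp h.2]
  rw [← Finset.prod_erase (f := fun j => ∏ mn ∈ s.filter
      (fun mn => (rho p hp mn.1, rho p hp mn.2) = (i, j)), (mn.1 - mn.2)) Finset.univ hdiag]
  apply Finset.prod_congr rfl
  intro j hj
  have hji : j ≠ i := Finset.ne_of_mem_erase hj
  rw [prodB, Finset.filter_filter]
  refine Finset.prod_congr (Finset.filter_congr ?_) (fun _ _ => rfl)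
  intro mn _
  simp only [Prod.mk.injEq, rho_eq_iff p hp]
  constructor
  · rintro ⟨_, h1, h2⟩; exact ⟨h1, h2⟩
  · rintro ⟨h1, h2⟩
    refine ⟨?_, h1, h2⟩
    rw [dvd_sub_iff, h1, h2]
    intro hc
    apply hji
    have h0i : (0:ℤ) ≤ (i:ℤ) := by positivity
    have h0j : (0:ℤ) ≤ (j:ℤ) := by positivity
    have : (i:ℕ) = (j:ℕ) := by exact_mod_cast hc
    exact (Fin.ext this).symm


end MayaAux

/-- The factorization of the product of hook lengths into `p`-fold and non-`p`-fold
parts, expressed via the `p`-modular decomposition of the Maya diagram. -/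
theorem hook_product_factorization (p : ℕ) (hp : 0 < p) (lam : YoungDiagram) :
    (∏ c ∈ lam.cells.filter (fun c => p ∣ hook lam c), (hook lam c : ℤ)) =
      (∏ i : Fin p,
        ∏ᶠ mn ∈ {mn : ℤ × ℤ | mn.1 ∈ quotientSet p lam i ∧
            mn.2 ∉ quotientSet p lam i ∧ mn.2 < mn.1},
          ((p : ℤ) * (mn.1 - mn.2))) ∧
    (∏ c ∈ lam.cells.filter (fun c => ¬ p ∣ hook lam c), (hook lam c : ℤ)) =
      (∏ i : Fin p, ∏ j ∈ Finset.univ.erase i,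
        ∏ᶠ mn ∈ {mn : ℤ × ℤ | mn.1 ∈ quotientSet p lam i ∧
            mn.2 ∉ quotientSet p lam j ∧
            (p : ℤ) * mn.2 + (j : ℤ) < (p : ℤ) * mn.1 + (i : ℤ)},
          (((p : ℤ) * mn.1 + (i : ℤ)) - ((p : ℤ) * mn.2 + (j : ℤ)))) ∧
    (∏ c ∈ lam.cells, (hook lam c : ℤ)) =
      (∏ i : Fin p,
        ∏ᶠ mn ∈ {mn : ℤ × ℤ | mn.1 ∈ quotientSet p lam i ∧
            mn.2 ∉ quotientSet p lam i ∧ mn.2 < mn.1},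
          ((p : ℤ) * (mn.1 - mn.2))) *
      (∏ i : Fin p, ∏ j ∈ Finset.univ.erase i,
        ∏ᶠ mn ∈ {mn : ℤ × ℤ | mn.1 ∈ quotientSet p lam i ∧
            mn.2 ∉ quotientSet p lam j ∧
            (p : ℤ) * mn.2 + (j : ℤ) < (p : ℤ) * mn.1 + (i : ℤ)},
          (((p : ℤ) * mn.1 + (i : ℤ)) - ((p : ℤ) * mn.2 + (j : ℤ)))) := by
  have h1 : (∏ c ∈ lam.cells.filter (fun c => p ∣ hook lam c), (hook lam c : ℤ)) =
      (∏ i : Fin p,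
        ∏ᶠ mn ∈ {mn : ℤ × ℤ | mn.1 ∈ quotientSet p lam i ∧
            mn.2 ∉ quotientSet p lam i ∧ mn.2 < mn.1},
          ((p : ℤ) * (mn.1 - mn.2))) := by
    rw [MayaAux.prod_part1 lam p hp]
    refine Finset.prod_congr rfl (fun i _ => ?_)
    exact (finprod_mem_eq_finite_toFinset_prod _ (MayaAux.Dset_finite lam p i)).symm
  have h2 : (∏ c ∈ lam.cells.filter (fun c => ¬ p ∣ hook lam c), (hook lam c : ℤ)) =
      (∏ i : Fin p, ∏ j ∈ Finset.univ.erase i,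
        ∏ᶠ mn ∈ {mn : ℤ × ℤ | mn.1 ∈ quotientSet p lam i ∧
            mn.2 ∉ quotientSet p lam j ∧
            (p : ℤ) * mn.2 + (j : ℤ) < (p : ℤ) * mn.1 + (i : ℤ)},
          (((p : ℤ) * mn.1 + (i : ℤ)) - ((p : ℤ) * mn.2 + (j : ℤ)))) := by
    rw [MayaAux.prod_part2 lam p hp]
    refine Finset.prod_congr rfl (fun i _ => ?_)
    refine Finset.prod_congr rfl (fun j _ => ?_)
    exact (finprod_mem_eq_finite_toFinset_prod _ (MayaAux.D2set_finite lam p i j)).symm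
  refine ⟨h1, h2, ?_⟩
  rw [← h1, ← h2, Finset.prod_filter_mul_prod_filter_not]
end
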